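/- Let k be a field with char k ≠ 2 and let R = k[X]/(X²) with maximal ideal m = (X). For a ∈ k*, consider the automorphism ξ_a = diag(a⁻¹·1_R, a²·1_m) of R ⊕ m. The subgroup of Aut_R(R ⊕ m)_ab generated by the classes of all ξ_a (a ∈ k*) maps, under the isomorphism Aut_R(R ⊕ m)_ab ≅ k* × k* (given by (α_{ij}) ↦ ([α₁₁(1)], det)), onto the subgroup {(a⁻¹, a) : a ∈ k*}, and the quotient of k* × k* by this subgroup is isomorphic to k* via (b, a) ↦ ba. -/

import Mathlib

set_option synthInstance.maxHeartbeats 1000000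
set_option maxHeartbeats 1000000

/-- The maximal ideal `m = (X)` of the dual numbers `R = k[X]/(X²)`. -/
def dualMax (k : Type*) [Field k] : Ideal (DualNumber k) :=
  Ideal.span {(DualNumber.eps : DualNumber k)}

/-- The automorphism group `Aut_R(R ⊕ m)` for `R = k[X]/(X²)`, `m = (X)`. -/
abbrev dualAut (k : Type*) [Field k] :=
  (DualNumber k × dualMax k) ≃ₗ[DualNumber k] (DualNumber k × dualMax k)

/-- The set of classes in `Aut_R(R ⊕ m)_ab` of the automorphisms
`ξ_a = diag(a⁻¹·1_R, a²·1_m)`, for `a ∈ k*`. -/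
def xiSet (k : Type*) [Field k] : Set (Abelianization (dualAut k)) :=
  {gg | ∃ (a : kˣ) (α : dualAut k),
    (∀ (x : DualNumber k) (y : dualMax k),
      (α (x, y)).1 = TrivSqZeroExt.inl ((a : k)⁻¹) * x ∧
      ((α (x, y)).2 : DualNumber k) = TrivSqZeroExt.inl ((a : k) ^ 2) * (y : DualNumber k)) ∧
    gg = Abelianization.of α}

open TrivSqZeroExt in
noncomputable def du {k : Type*} [Field k] (c : kˣ) : (DualNumber k)ˣ :=
  Units.map (TrivSqZeroExt.inlHom k k : k →* DualNumber k) c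

noncomputable def xi {k : Type*} [Field k] (a : kˣ) : dualAut k :=
  (LinearEquiv.smulOfUnit (M := DualNumber k) (du a⁻¹)).prodCongr
    (LinearEquiv.smulOfUnit (M := dualMax k) (du (a ^ 2)))

open TrivSqZeroExt in
theorem xi_spec {k : Type*} [Field k] (a : kˣ) (x : DualNumber k) (y : dualMax k) :
    (xi a (x, y)).1 = inl ((a : k)⁻¹) * x ∧
    ((xi a (x, y)).2 : DualNumber k) = inl ((a : k) ^ 2) * (y : DualNumber k) := by
  constructor
  · show (du a⁻¹ : (DualNumber k)ˣ) • x = _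
    rw [Units.smul_def, smul_eq_mul]
    congr 1
    show inl ((a⁻¹ : kˣ) : k) = _
    rw [Units.val_inv_eq_inv_val]
  · show ((du (a ^ 2) : (DualNumber k)ˣ) • y : DualNumber k) = _
    rw [Units.smul_def, smul_eq_mul]
    congr 1

open TrivSqZeroExt in
theorem omega_xi {k : Type*} [Field k]
    (ω : Abelianization (dualAut k) ≃* kˣ × kˣ)
    (hω : ∀ α : dualAut k,
      (((ω (Abelianization.of α)).1 : k) = TrivSqZeroExt.fst ((α (1, 0)).1)) ∧
      (∀ x : dualMax k,
        TrivSqZeroExt.inl (((ω (Abelianization.of α)).2 : k)) * (x : DualNumber k)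
          = (α (((α (0, x)).2 : DualNumber k), 0)).1
            - ((α ((α (0, x)).1, 0)).2 : DualNumber k)))
    (a : kˣ) (α : dualAut k)
    (hprop : ∀ (x : DualNumber k) (y : dualMax k),
      (α (x, y)).1 = TrivSqZeroExt.inl ((a : k)⁻¹) * x ∧
      ((α (x, y)).2 : DualNumber k) = TrivSqZeroExt.inl ((a : k) ^ 2) * (y : DualNumber k)) :
    ω (Abelianization.of α) = (a⁻¹, a) := by
  obtain ⟨h1, h2⟩ := hω α
  have heps : (DualNumber.eps : DualNumber k) ∈ dualMax k :=
    Ideal.subset_span (Set.mem_singleton _)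
  set x0 : dualMax k := ⟨DualNumber.eps, heps⟩ with hx0
  have hx0c : (x0 : DualNumber k) = DualNumber.eps := rfl
  have key := h2 x0
  have e1 : (α (0, x0)).1 = 0 := by
    rw [(hprop 0 x0).1, mul_zero]
  have e2 : ((α (0, x0)).2 : DualNumber k) = inl ((a : k) ^ 2) * DualNumber.eps :=
    (hprop 0 x0).2
  rw [e1, e2] at key
  have e3 : (α (inl ((a : k) ^ 2) * DualNumber.eps, 0)).1
      = inl ((a : k)⁻¹) * (inl ((a : k) ^ 2) * DualNumber.eps) :=
    (hprop _ 0).1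
  have e4 : ((α ((0 : DualNumber k), (0 : dualMax k))).2 : DualNumber k) = 0 := by
    rw [(hprop 0 0).2]; simp
  rw [e3, e4, sub_zero, hx0c] at key
  -- key : inl d * eps = inl a⁻¹ * (inl a² * eps)
  have hsnd := congrArg TrivSqZeroExt.snd key
  simp only [DualNumber.eps, ← inl_mul, snd_mul, snd_inl, snd_inr, fst_inl, fst_inr,
    smul_eq_mul, mul_zero, zero_mul, add_zero, zero_add, mul_one, MulOpposite.op_smul,
    MulOpposite.smul_eq_mul_unop, MulOpposite.unop_op] at hsnd
  have hane : (a : k) ≠ 0 := a.ne_zero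
  have hd2 : ((ω (Abelianization.of α)).2 : k) = (a : k) := by
    rw [hsnd]; field_simp
  have hd1 : ((ω (Abelianization.of α)).1 : k) = (a : k)⁻¹ := by
    rw [h1, (hprop 1 0).1, mul_one, fst_inl]
  ext
  · rw [hd1, Units.val_inv_eq_inv_val]
  · exact hd2


/-- Let `k` be a field with `char k ≠ 2`, `R = k[X]/(X²)` with maximal ideal
`m = (X)`. Under any isomorphism `ω : Aut_R(R ⊕ m)_ab ≅ k* × k*` given by
`(α_{ij}) ↦ ([α₁₁(1)], det)` (first component: residue of `α₁₁(1)`, i.e. its constant term;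
second component: the scalar in `k` representing `α₁₁α₂₂ − α₂₁α₁₂ ∈ End_R(m) ≅ k`), the
subgroup of `Aut_R(R ⊕ m)_ab` generated by the classes of `ξ_a = diag(a⁻¹·1_R, a²·1_m)`
(`a ∈ k*`) maps onto the subgroup `{(a⁻¹, a) : a ∈ k*}`, and the quotient of `k* × k*` by
this subgroup is isomorphic to `k*` via `(b, a) ↦ ba`. -/
theorem stmt_17 {k : Type*} [Field k] (hchar : (2 : k) ≠ 0)
    (ω : Abelianization (dualAut k) ≃* kˣ × kˣ)
    (hω : ∀ α : dualAut k,
      (((ω (Abelianization.of α)).1 : k) = TrivSqZeroExt.fst ((α (1, 0)).1)) ∧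
      (∀ x : dualMax k,
        TrivSqZeroExt.inl (((ω (Abelianization.of α)).2 : k)) * (x : DualNumber k)
          = (α (((α (0, x)).2 : DualNumber k), 0)).1
            - ((α ((α (0, x)).1, 0)).2 : DualNumber k))) :
    ((Subgroup.map ω.toMonoidHom (Subgroup.closure (xiSet k)) : Subgroup (kˣ × kˣ)) :
        Set (kˣ × kˣ)) = {p : kˣ × kˣ | ∃ a : kˣ, p = (a⁻¹, a)} ∧
    ∃ q : ((kˣ × kˣ) ⧸ Subgroup.map ω.toMonoidHom (Subgroup.closure (xiSet k))) ≃* kˣ,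
      ∀ p : kˣ × kˣ, q (QuotientGroup.mk p) = p.1 * p.2 := by
  set f : kˣ × kˣ →* kˣ := (MonoidHom.fst kˣ kˣ) * (MonoidHom.snd kˣ kˣ) with hf
  have hfapp : ∀ p : kˣ × kˣ, f p = p.1 * p.2 := fun p => rfl
  have himg : ω.toMonoidHom '' (xiSet k) = (f.ker : Set (kˣ × kˣ)) := by
    ext p
    constructor
    · rintro ⟨g, ⟨a, α, hprop, rfl⟩, rfl⟩
      have := omega_xi ω hω a α hprop
      show f _ = 1
      rw [hfapp]
      show (ω (Abelianization.of α)).1 * (ω (Abelianization.of α)).2 = 1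
      rw [this]
      simp
    · intro hp
      have hp' : p.1 * p.2 = 1 := hp
      have hp1 : p.1 = p.2⁻¹ := eq_inv_of_mul_eq_one_left hp'
      refine ⟨Abelianization.of (xi p.2), ⟨p.2, xi p.2, fun x y => xi_spec p.2 x y, rfl⟩, ?_⟩
      show ω (Abelianization.of (xi p.2)) = p
      rw [omega_xi ω hω p.2 (xi p.2) (fun x y => xi_spec p.2 x y)]
      exact Prod.ext hp1.symm rfl
  have hMap : Subgroup.map ω.toMonoidHom (Subgroup.closure (xiSet k)) = f.ker := by
    rw [MonoidHom.map_closure, himg, Subgroup.closure_eq]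
  constructor
  · rw [hMap]
    ext p
    simp only [SetLike.mem_coe, MonoidHom.mem_ker, hfapp, Set.mem_setOf_eq]
    constructor
    · intro h
      exact ⟨p.2, Prod.ext (eq_inv_of_mul_eq_one_left h) rfl⟩
    · rintro ⟨a, rfl⟩
      simp
  · rw [hMap]
    have hsurj : Function.Surjective f := fun c => ⟨(c, 1), by simp [hfapp]⟩
    refine ⟨QuotientGroup.quotientKerEquivOfSurjective f hsurj, fun p => ?_⟩
    rfl
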